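/- For every real z < −3: |−9·e^{4z/3} + 18·e^{2z/3} − 6z·e^{2z/3} − 18z·e^{5z/3} + 18z·e^{7z/3} − 9z²·e^{2z} − 9z²·e^{4z/3} + 6z²·e^{5z/3}| / 9 < 2.03. -/
import Mathlib


open Real

private lemma key1 (z c : ℝ) (hc : 1/3 ≤ c) (hz : z < -3) :
    -z * exp (c * z) ≤ 3 * exp (-(3 * c)) := by
  have hs : (0:ℝ) ≤ -z - 3 := by linarith
  have h1 : c * (-z - 3) + 1 ≤ exp (c * (-z - 3)) := Real.add_one_le_exp _
  have h2 : -z ≤ 3 * exp (c * (-z - 3)) := by nlinarith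
  have hpos : (0:ℝ) < exp (c * z) := exp_pos _
  have := mul_le_mul_of_nonneg_right h2 hpos.le
  calc -z * exp (c * z) ≤ 3 * exp (c * (-z - 3)) * exp (c * z) := this
    _ = 3 * exp (-(3 * c)) := by rw [mul_assoc, ← exp_add]; ring_nf

private lemma key2 (z c : ℝ) (hc : 2/3 ≤ c) (hz : z < -3) :
    z ^ 2 * exp (c * z) ≤ 9 * exp (-(3 * c)) := by
  have hs : (0:ℝ) ≤ -z - 3 := by linarith
  have h1 : (c/2) * (-z - 3) + 1 ≤ exp ((c/2) * (-z - 3)) := Real.add_one_le_exp _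
  have h2 : -z ≤ 3 * exp ((c/2) * (-z - 3)) := by nlinarith
  have hexp : (0:ℝ) < exp ((c/2) * (-z - 3)) := exp_pos _
  have h3 : z ^ 2 ≤ 9 * exp ((c/2) * (-z - 3)) ^ 2 := by nlinarith
  have h4 : exp ((c/2) * (-z - 3)) ^ 2 = exp (c * (-z - 3)) := by
    rw [sq, ← exp_add]; ring_nf
  rw [h4] at h3
  have hpos : (0:ℝ) < exp (c * z) := exp_pos _
  calc z ^ 2 * exp (c * z) ≤ 9 * exp (c * (-z - 3)) * exp (c * z) :=
        mul_le_mul_of_nonneg_right h3 hpos.le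
    _ = 9 * exp (-(3 * c)) := by rw [mul_assoc, ← exp_add]; ring_nf

private lemma e2_bound : exp (-2 : ℝ) ≤ 0.14 := by
  have h : (2.7182818283 : ℝ) < exp 1 := Real.exp_one_gt_d9
  have h2 : (7.2 : ℝ) < exp 2 := by
    have : exp 2 = exp 1 * exp 1 := by rw [← exp_add]; norm_num
    nlinarith
  have : exp (-2 : ℝ) = (exp 2)⁻¹ := by rw [← exp_neg]
  rw [this]
  rw [inv_le_comm₀ (by positivity) (by norm_num)]
  norm_num
  linarith

private lemma e4_bound : exp (-4 : ℝ) ≤ 0.02 := by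
  have h : (2.7182818283 : ℝ) < exp 1 := Real.exp_one_gt_d9
  have h2 : (7.2 : ℝ) < exp 2 := by
    have : exp 2 = exp 1 * exp 1 := by rw [← exp_add]; norm_num
    nlinarith
  have h4 : (51 : ℝ) < exp 4 := by
    have : exp 4 = exp 2 * exp 2 := by rw [← exp_add]; norm_num
    nlinarith
  have : exp (-4 : ℝ) = (exp 4)⁻¹ := by rw [← exp_neg]
  rw [this]
  rw [inv_le_comm₀ (by positivity) (by norm_num)]
  norm_num
  linarith

/-- For every `z < -3`, the exponential part `R₂(z)` of `z⁴·Det(Δ'_{2×2})`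
for the third-order ETDRK scheme (3.14) satisfies `|R₂(z)| < 2.03`. -/
theorem stmt12 : ∀ z : ℝ, z < -3 →
    |(-9 * exp (4 * z / 3) + 18 * exp (2 * z / 3) - 6 * z * exp (2 * z / 3)
        - 18 * z * exp (5 * z / 3) + 18 * z * exp (7 * z / 3) - 9 * z ^ 2 * exp (2 * z)
        - 9 * z ^ 2 * exp (4 * z / 3) + 6 * z ^ 2 * exp (5 * z / 3))| / 9 < 2.03 := by
  intro z hz
  have he2 := e2_bound
  have he4 := e4_bound
  -- plain exponential bounds
  have b1 : exp (4 * z / 3) ≤ 0.02 := by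
    calc exp (4 * z / 3) ≤ exp (-4) := exp_le_exp.2 (by linarith)
      _ ≤ 0.02 := he4
  have b2 : exp (2 * z / 3) ≤ 0.14 := by
    calc exp (2 * z / 3) ≤ exp (-2) := exp_le_exp.2 (by linarith)
      _ ≤ 0.14 := he2
  -- linear bounds
  have b3 : -z * exp (2 * z / 3) ≤ 0.42 := by
    have := key1 z (2/3) (by norm_num) hz
    rw [show (2/3:ℝ) * z = 2 * z / 3 by ring] at this
    have h : exp (-(3 * (2/3)) : ℝ) ≤ 0.14 := by rw [show (-(3 * (2/3)) : ℝ) = -2 by norm_num]; exact he2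
    linarith
  have b4 : -z * exp (5 * z / 3) ≤ 0.06 := by
    have := key1 z (5/3) (by norm_num) hz
    rw [show (5/3:ℝ) * z = 5 * z / 3 by ring] at this
    have h : exp (-(3 * (5/3)) : ℝ) ≤ 0.02 := by
      calc exp (-(3 * (5/3)) : ℝ) ≤ exp (-4) := exp_le_exp.2 (by norm_num)
        _ ≤ 0.02 := he4
    linarith
  have b5 : -z * exp (7 * z / 3) ≤ 0.06 := by
    have := key1 z (7/3) (by norm_num) hz
    rw [show (7/3:ℝ) * z = 7 * z / 3 by ring] at this
    have h : exp (-(3 * (7/3)) : ℝ) ≤ 0.02 := by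
      calc exp (-(3 * (7/3)) : ℝ) ≤ exp (-4) := exp_le_exp.2 (by norm_num)
        _ ≤ 0.02 := he4
    linarith
  -- quadratic bounds
  have b6 : z ^ 2 * exp (2 * z) ≤ 0.18 := by
    have h6 := key2 z 2 (by norm_num) hz
    rw [show (-(3 * (2:ℝ))) = -6 by norm_num] at h6
    have h : exp (-6 : ℝ) ≤ 0.02 := by
      calc exp (-6 : ℝ) ≤ exp (-4) := exp_le_exp.2 (by norm_num)
        _ ≤ 0.02 := he4
    linarith
  have b7 : z ^ 2 * exp (4 * z / 3) ≤ 0.18 := by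
    have := key2 z (4/3) (by norm_num) hz
    rw [show (4/3:ℝ) * z = 4 * z / 3 by ring] at this
    have h : exp (-(3 * (4/3)) : ℝ) ≤ 0.02 := by rw [show (-(3 * (4/3)) : ℝ) = -4 by norm_num]; exact he4
    linarith
  have b8 : z ^ 2 * exp (5 * z / 3) ≤ 0.18 := by
    have := key2 z (5/3) (by norm_num) hz
    rw [show (5/3:ℝ) * z = 5 * z / 3 by ring] at this
    have h : exp (-(3 * (5/3)) : ℝ) ≤ 0.02 := by
      calc exp (-(3 * (5/3)) : ℝ) ≤ exp (-4) := exp_le_exp.2 (by norm_num)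
        _ ≤ 0.02 := he4
    linarith
  -- positivity facts
  have p1 : (0:ℝ) < exp (4 * z / 3) := exp_pos _
  have p2 : (0:ℝ) < exp (2 * z / 3) := exp_pos _
  have p3 : (0:ℝ) < exp (5 * z / 3) := exp_pos _
  have p4 : (0:ℝ) < exp (7 * z / 3) := exp_pos _
  have p5 : (0:ℝ) < exp (2 * z) := exp_pos _
  have hzneg : z < 0 := by linarith
  have hsq : (0:ℝ) ≤ z ^ 2 := sq_nonneg z
  rw [div_lt_iff₀ (by norm_num : (0:ℝ) < 9)]
  rw [abs_lt]
  constructor <;> nlinarith [mul_pos (neg_pos.2 hzneg) p2, mul_pos (neg_pos.2 hzneg) p3,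
    mul_pos (neg_pos.2 hzneg) p4, mul_nonneg hsq p5.le, mul_nonneg hsq p1.le,
    mul_nonneg hsq p3.le]
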